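/- Let (F_k)_{k≥0} be real numbers indexed by the cells A^(k)_i (0 ≤ i < 4^k), with F(A^(0)_0) =: F_0 < ∞ and all F(A^(k)_i) ≥ 0. Let μ be a probability measure with masses μ(A^(k)_i), μ(A^(0)_0) = 1. Suppose for every k ≥ 1 and 0 ≤ i < 4^(k-1): (μ(A^(k-1)_i))^(1/2)·F(A^(k-1)_i) ≥ (1/64)·2^(-k)·Σ_{j=0}^3 (μ(A^(k)_{4i+j}))^(1/2)·1[4i+j ∈ I(k)] + Σ_{j=0}^3 (μ(A^(k)_{4i+j}))^(1/2)·F(A^(k)_{4i+j}). Then Σ_{k=1}^∞ 2^(-k) Σ_{i=0}^{4^k-1} (μ(A^(k)_i))^(1/2)·1[i ∈ I(k)] ≤ 64·F_0. -/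

import Mathlib

lemma sum_mul4 (f : ℕ → ℝ) (n : ℕ) :
    ∑ i ∈ Finset.range (4 * n), f i
      = ∑ i ∈ Finset.range n, ∑ j ∈ Finset.range 4, f (4 * i + j) := by
  induction n with
  | zero => simp
  | succ n ih =>
    rw [Finset.sum_range_succ, ← ih, Nat.mul_succ]
    have : 4 * n + 4 = ((((4 * n) + 1) + 1) + 1) + 1 := by ring
    rw [this]
    simp [Finset.sum_range_succ]
    ring

/- Abstract summation-along-the-tree argument (Proposition 5 of the paper). -/
open Classical in
theorem stmt16 (F : ℕ → ℕ → ℝ) (m : ℕ → ℕ → ℝ)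
    (hF : ∀ k i, i < 4 ^ k → 0 ≤ F k i) (hm : ∀ k i, 0 ≤ m k i) (hm0 : m 0 0 = 1)
    (I : ℕ → Set ℕ)
    (hstep : ∀ k : ℕ, 1 ≤ k → ∀ i < 4 ^ (k - 1),
      (1/64) * (2:ℝ) ^ (-(k : ℤ)) *
          (∑ j ∈ Finset.range 4,
            if 4 * i + j ∈ I k then Real.sqrt (m k (4 * i + j)) else 0) +
        (∑ j ∈ Finset.range 4, Real.sqrt (m k (4 * i + j)) * F k (4 * i + j)) ≤
        Real.sqrt (m (k - 1) i) * F (k - 1) i) :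
    (∑' k : ℕ, (2:ℝ) ^ (-(k : ℤ) - 1) *
        ∑ i ∈ Finset.range (4 ^ (k + 1)),
          if i ∈ I (k + 1) then Real.sqrt (m (k + 1) i) else 0) ≤ 64 * F 0 0 := by
  set S : ℕ → ℝ := fun k => ∑ i ∈ Finset.range (4 ^ k), Real.sqrt (m k i) * F k i with hS
  set g : ℕ → ℝ := fun k => (2:ℝ) ^ (-(k : ℤ) - 1) *
        ∑ i ∈ Finset.range (4 ^ (k + 1)),
          if i ∈ I (k + 1) then Real.sqrt (m (k + 1) i) else 0 with hg
  have hSnn : ∀ k, 0 ≤ S k := by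
    intro k
    apply Finset.sum_nonneg
    intro i hi
    exact mul_nonneg (Real.sqrt_nonneg _) (hF k i (Finset.mem_range.mp hi))
  have hgnn : ∀ k, 0 ≤ g k := by
    intro k
    apply mul_nonneg (by positivity)
    apply Finset.sum_nonneg
    intro i hi
    split
    · exact Real.sqrt_nonneg _
    · exact le_rfl
  have hS0 : S 0 = F 0 0 := by
    simp [hS, hm0]
  have key : ∀ n, (1/64) * (∑ k ∈ Finset.range n, g k) + S n ≤ F 0 0 := by
    intro n
    induction n with
    | zero => simp [hS0, hSnn 0]
    | succ n ih =>
      rw [Finset.sum_range_succ]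
      have step : (1/64) * g n + S (n + 1) ≤ S n := by
        have h4 : (4:ℕ) ^ (n + 1) = 4 * 4 ^ n := by ring
        have e1 : S (n + 1)
            = ∑ i ∈ Finset.range (4 ^ n), ∑ j ∈ Finset.range 4,
                Real.sqrt (m (n+1) (4 * i + j)) * F (n+1) (4 * i + j) := by
          rw [hS]; simp only [h4]; exact sum_mul4 _ _
        have e2 : g n = (2:ℝ) ^ (-((n+1) : ℤ)) *
            ∑ i ∈ Finset.range (4 ^ n), ∑ j ∈ Finset.range 4,
              (if 4 * i + j ∈ I (n+1) then Real.sqrt (m (n+1) (4 * i + j)) else 0) := by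
          rw [hg]
          simp only [h4]
          rw [sum_mul4 (fun i => if i ∈ I (n+1) then Real.sqrt (m (n+1) i) else 0)]
          congr 1
          push_cast
          ring_nf
        rw [e1, e2, hS]
        have := fun i hi' => hstep (n+1) (by omega) i hi'
        calc 1 / 64 * ((2:ℝ) ^ (-((n+1) : ℤ)) *
              ∑ i ∈ Finset.range (4 ^ n), ∑ j ∈ Finset.range 4,
                (if 4 * i + j ∈ I (n+1) then Real.sqrt (m (n+1) (4 * i + j)) else 0)) +
            ∑ i ∈ Finset.range (4 ^ n), ∑ j ∈ Finset.range 4,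
                Real.sqrt (m (n+1) (4 * i + j)) * F (n+1) (4 * i + j)
            = ∑ i ∈ Finset.range (4 ^ n),
              ((1/64) * (2:ℝ) ^ (-((n+1) : ℤ)) *
                (∑ j ∈ Finset.range 4,
                  (if 4 * i + j ∈ I (n+1) then Real.sqrt (m (n+1) (4 * i + j)) else 0)) +
               ∑ j ∈ Finset.range 4,
                  Real.sqrt (m (n+1) (4 * i + j)) * F (n+1) (4 * i + j)) := by
              rw [Finset.mul_sum, Finset.mul_sum, ← Finset.sum_add_distrib]
              exact Finset.sum_congr rfl fun x _ => by ring
          _ ≤ ∑ i ∈ Finset.range (4 ^ n), Real.sqrt (m n i) * F n i := by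
              apply Finset.sum_le_sum
              intro i hi
              have := hstep (n+1) (by omega) i (by simpa using Finset.mem_range.mp hi)
              simpa using this
      calc 1/64 * (∑ k ∈ Finset.range n, g k + g n) + S (n + 1)
          = (1/64 * ∑ k ∈ Finset.range n, g k) + (1/64 * g n + S (n+1)) := by ring
        _ ≤ (1/64 * ∑ k ∈ Finset.range n, g k) + S n := by linarith
        _ ≤ F 0 0 := ih
  have hbound : ∀ n, ∑ k ∈ Finset.range n, g k ≤ 64 * F 0 0 := by
    intro n
    have := key n
    have := hSnn n
    linarith
  exact Real.tsum_le_of_sum_range_le hgnn hbound
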